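/- The matrix ĝ_{i j̄} = Φ_{i j̄}/Φ is positive definite at every point of ℂ² ∖ {0}, since it is a 2×2 Hermitian matrix with positive determinant 1/(Φ²Z³) and positive trace. -/

import Mathlib

open scoped ComplexOrder
open Matrix

/-- `Φᵢ = z̄ᵢ Φ^(1−2kᵢ)/Z`. -/
noncomputable def phiD (k1 k2 Φv Zv : ℝ) (z : ℂ × ℂ) (i : Fin 2) : ℂ :=
  (starRingEnd ℂ) (if i = 0 then z.1 else z.2)
    * ((Φv ^ (1 - 2 * (if i = 0 then k1 else k2)) : ℝ) : ℂ) / ((Zv : ℝ) : ℂ)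

/-- The explicit formula for the mixed Wirtinger second derivatives `Φ_{i j̄}`. -/
noncomputable def hessEntry (k1 k2 Φv Zv : ℝ) (z : ℂ × ℂ) (i j : Fin 2) : ℂ :=
  (if i = j then ((Φv ^ (1 - 2 * (if i = 0 then k1 else k2)) / Zv : ℝ) : ℂ) else 0)
    + (((1 - 2 * (if i = 0 then k1 else k2) - 2 * (if j = 0 then k1 else k2)
        + 4 / Zv * (k1 ^ 2 * ‖z.1‖ ^ 2 * Φv ^ (-(2 * k1))
            + k2 ^ 2 * ‖z.2‖ ^ 2 * Φv ^ (-(2 * k2)))) : ℝ) : ℂ)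
      * phiD k1 k2 Φv Zv z i * (starRingEnd ℂ) (phiD k1 k2 Φv Zv z j) / ((Φv : ℝ) : ℂ)

lemma posDef_aux (M : Matrix (Fin 2) (Fin 2) ℂ) (a d e : ℝ) (b : ℂ)
    (h00 : M 0 0 = (a : ℂ)) (h01 : M 0 1 = b)
    (h10 : M 1 0 = (starRingEnd ℂ) b) (h11 : M 1 1 = (d : ℂ))
    (ha : 0 < a) (hdet : a * d - Complex.normSq b = e) (he : 0 < e) :
    M.PosDef := by
  rw [Matrix.posDef_iff_dotProduct_mulVec]
  constructor
  · ext i j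
    fin_cases i <;> fin_cases j <;>
      simp [Matrix.conjTranspose_apply, h00, h01, h10, h11, Complex.conj_ofReal]
  · intro x hx
    have ha' : ((a:ℝ):ℂ) ≠ 0 := by exact_mod_cast ha.ne'
    have hQ : dotProduct (star x) (M *ᵥ x) =
        star (x 0) * (M 0 0 * x 0 + M 0 1 * x 1)
          + star (x 1) * (M 1 0 * x 0 + M 1 1 * x 1) := by
      simp [dotProduct, Matrix.mulVec, Fin.sum_univ_two]
    have key : (a:ℂ) * dotProduct (star x) (M *ᵥ x) =
        ((Complex.normSq ((a:ℂ) * x 0 + b * x 1) : ℝ) : ℂ)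
          + ((e:ℝ):ℂ) * ((Complex.normSq (x 1) : ℝ):ℂ) := by
      have he' : ((e:ℝ):ℂ) = (a:ℂ)*(d:ℂ) - ((Complex.normSq b : ℝ):ℂ) := by
        rw [← hdet]; push_cast; ring
      rw [hQ, h00, h01, h10, h11, he', ← Complex.mul_conj, ← Complex.mul_conj,
        ← Complex.mul_conj]
      simp only [Complex.star_def, map_add, _root_.map_mul, Complex.conj_ofReal]
      ring
    have hQval : dotProduct (star x) (M *ᵥ x) =
        (((Complex.normSq ((a:ℂ)*x 0 + b*x 1) + e * Complex.normSq (x 1))/a : ℝ) : ℂ) := by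
      refine mul_left_cancel₀ ha' (key.trans ?_)
      push_cast
      field_simp
    rw [hQval, Complex.zero_lt_real]
    have hx' : x 0 ≠ 0 ∨ x 1 ≠ 0 := by
      by_contra h
      push_neg at h
      exact hx (funext fun i => by fin_cases i <;> simp [h.1, h.2])
    rcases hx' with h | h
    · rcases eq_or_ne (x 1) 0 with h1 | h1
      · have : (a:ℂ)*x 0 + b*x 1 ≠ 0 := by
          rw [h1]; simpa [ha'] using h
        have := Complex.normSq_pos.2 this
        have h2 := Complex.normSq_nonneg (x 1)
        positivity
      · have := Complex.normSq_pos.2 h1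
        have h2 := Complex.normSq_nonneg ((a:ℂ)*x 0 + b*x 1)
        positivity
    · have := Complex.normSq_pos.2 h
      have h2 := Complex.normSq_nonneg ((a:ℂ)*x 0 + b*x 1)
      positivity

lemma keytrace (k1 k2 p q Z T : ℝ) (hsum : k1 + k2 = 1) (hpq : p + q = 1)
    (hZ : Z = 2*(k1*p+k2*q)) (hT : T = k1^2*p + k2^2*q) :
    Z^2 + (1-4*k1)*p*Z + 4*T*p = 4*k2^2*q + p*Z := by
  have h1 : k2 = 1 - k1 := by linarith
  have h2 : q = 1 - p := by linarith
  subst h1 h2 hZ hT; ring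

lemma keydet (k1 k2 p q Z T : ℝ) (hsum : k1 + k2 = 1) (hpq : p + q = 1)
    (hZ : Z = 2*(k1*p+k2*q)) (hT : T = k1^2*p + k2^2*q) :
    (Z^2 + (1-4*k1)*p*Z + 4*T*p) * (Z^2 + (1-4*k2)*q*Z + 4*T*q) - (4*T-Z)^2*p*q = Z^3 := by
  have h1 : k2 = 1 - k1 := by linarith
  have h2 : q = 1 - p := by linarith
  subst h1 h2 hZ hT; ring

lemma divlem (F G T Z b1 b2 r1 r2 : ℝ) (hZ0 : Z ≠ 0)
    (hkd : F * G - (4*T - Z)^2*(r1*b1)*(r2*b2) = Z^3) :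
    b1 * F / Z^3 * (b2 * G / Z^3) - ((4*T - Z) * (b1*b2) / Z^3)^2 * (r1*r2) = b1*b2/Z^3 := by
  have hw : (Z^3)⁻¹ * Z^3 = 1 := inv_mul_cancel₀ (pow_ne_zero 3 hZ0)
  simp only [div_eq_mul_inv]
  linear_combination (b1*b2*((Z^3)⁻¹)^2) * hkd + (b1*b2*(Z^3)⁻¹) * hw

set_option maxHeartbeats 1000000 in
/-- The 2×2 Hermitian matrix `ĝ_{i j̄} = Φ_{i j̄}/Φ` is positive definite at every point
of `ℂ² ∖ {0}`. -/
theorem stmt_8 (k1 k2 : ℝ) (hk1 : 0 < k1) (hk12 : k1 ≤ k2) (hsum : k1 + k2 = 1)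
    (z : ℂ × ℂ) (hz : z ≠ 0) (Φv : ℝ) (hΦ : 0 < Φv)
    (heq : ‖z.1‖ ^ 2 * Φv ^ (-(2 * k1)) + ‖z.2‖ ^ 2 * Φv ^ (-(2 * k2)) = 1)
    (Zv : ℝ)
    (hZ : Zv = 2 * (k1 * ‖z.1‖ ^ 2 * Φv ^ (-(2 * k1))
        + k2 * ‖z.2‖ ^ 2 * Φv ^ (-(2 * k2)))) :
    (Matrix.of fun i j : Fin 2 => hessEntry k1 k2 Φv Zv z i j / ((Φv : ℝ) : ℂ)).PosDef := by
  have hk2 : 0 < k2 := lt_of_lt_of_le hk1 hk12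
  have hb1 : 0 < Φv ^ (-(2 * k1)) := Real.rpow_pos_of_pos hΦ _
  have hb2 : 0 < Φv ^ (-(2 * k2)) := Real.rpow_pos_of_pos hΦ _
  have hr1' : (0:ℝ) ≤ ‖z.1‖ ^ 2 := by positivity
  have hr2' : (0:ℝ) ≤ ‖z.2‖ ^ 2 := by positivity
  have hp : (0:ℝ) ≤ ‖z.1‖ ^ 2 * Φv ^ (-(2 * k1)) := by positivity
  have hq : (0:ℝ) ≤ ‖z.2‖ ^ 2 * Φv ^ (-(2 * k2)) := by positivity
  have hZ' : Zv = 2*(k1*(‖z.1‖ ^ 2 * Φv ^ (-(2 * k1)))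
      + k2*(‖z.2‖ ^ 2 * Φv ^ (-(2 * k2)))) := by rw [hZ]; ring
  have hZpos : 0 < Zv := by nlinarith
  have hZc : ((Zv:ℝ):ℂ) ≠ 0 := by exact_mod_cast hZpos.ne'
  have hΦc : ((Φv:ℝ):ℂ) ≠ 0 := by exact_mod_cast hΦ.ne'
  have hsC : (k1:ℂ) + (k2:ℂ) = 1 := by exact_mod_cast hsum
  have hT : k1 ^ 2 * ‖z.1‖ ^ 2 * Φv ^ (-(2 * k1))
        + k2 ^ 2 * ‖z.2‖ ^ 2 * Φv ^ (-(2 * k2))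
      = k1^2*(‖z.1‖ ^ 2 * Φv ^ (-(2 * k1)))
        + k2^2*(‖z.2‖ ^ 2 * Φv ^ (-(2 * k2))) := by ring
  have hΦ1 : Φv ^ (1 - 2 * k1) = Φv * Φv ^ (-(2 * k1)) := by
    rw [show (1 - 2*k1) = 1 + (-(2*k1)) by ring, Real.rpow_add hΦ, Real.rpow_one]
  have hΦ2 : Φv ^ (1 - 2 * k2) = Φv * Φv ^ (-(2 * k2)) := by
    rw [show (1 - 2*k2) = 1 + (-(2*k2)) by ring, Real.rpow_add hΦ, Real.rpow_one]
  have hzz1 : z.1 * (starRingEnd ℂ) z.1 = ((‖z.1‖ : ℝ):ℂ)^2 := by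
    rw [Complex.mul_conj, Complex.normSq_eq_norm_sq]; push_cast; ring
  have hzz2 : z.2 * (starRingEnd ℂ) z.2 = ((‖z.2‖ : ℝ):ℂ)^2 := by
    rw [Complex.mul_conj, Complex.normSq_eq_norm_sq]; push_cast; ring
  have h0 : phiD k1 k2 Φv Zv z 0
      = (starRingEnd ℂ) z.1 * ((Φv * Φv ^ (-(2 * k1)) : ℝ):ℂ) / ((Zv:ℝ):ℂ) := by
    simp [phiD, hΦ1]
  have h1 : phiD k1 k2 Φv Zv z 1
      = (starRingEnd ℂ) z.2 * ((Φv * Φv ^ (-(2 * k2)) : ℝ):ℂ) / ((Zv:ℝ):ℂ) := by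
    simp [phiD, hΦ2]
  have hp00 : phiD k1 k2 Φv Zv z 0 * (starRingEnd ℂ) (phiD k1 k2 Φv Zv z 0)
      = ((((Φv * Φv ^ (-(2 * k1)))^2 * ‖z.1‖ ^ 2 / Zv^2 : ℝ)) : ℂ) := by
    rw [h0]
    simp only [map_div₀, _root_.map_mul, Complex.conj_conj, Complex.conj_ofReal]
    push_cast
    linear_combination ((Φv:ℂ)*((Φv ^ (-(2 * k1)):ℝ):ℂ))^2/((Zv:ℂ))^2 * hzz1
  have hp11 : phiD k1 k2 Φv Zv z 1 * (starRingEnd ℂ) (phiD k1 k2 Φv Zv z 1)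
      = ((((Φv * Φv ^ (-(2 * k2)))^2 * ‖z.2‖ ^ 2 / Zv^2 : ℝ)) : ℂ) := by
    rw [h1]
    simp only [map_div₀, _root_.map_mul, Complex.conj_conj, Complex.conj_ofReal]
    push_cast
    linear_combination ((Φv:ℂ)*((Φv ^ (-(2 * k2)):ℝ):ℂ))^2/((Zv:ℂ))^2 * hzz2
  have hp01 : phiD k1 k2 Φv Zv z 0 * (starRingEnd ℂ) (phiD k1 k2 Φv Zv z 1)
      = (((Φv * Φv ^ (-(2 * k1)) * (Φv * Φv ^ (-(2 * k2))) / Zv^2 : ℝ)) : ℂ)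
        * ((starRingEnd ℂ) z.1 * z.2) := by
    rw [h0, h1]
    simp only [map_div₀, _root_.map_mul, Complex.conj_conj, Complex.conj_ofReal]
    push_cast
    ring
  have hp10 : phiD k1 k2 Φv Zv z 1 * (starRingEnd ℂ) (phiD k1 k2 Φv Zv z 0)
      = (((Φv * Φv ^ (-(2 * k1)) * (Φv * Φv ^ (-(2 * k2))) / Zv^2 : ℝ)) : ℂ)
        * ((starRingEnd ℂ) z.2 * z.1) := by
    rw [h0, h1]
    simp only [map_div₀, _root_.map_mul, Complex.conj_conj, Complex.conj_ofReal]
    push_cast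
    ring
  refine posDef_aux _
      (Φv ^ (-(2 * k1)) * (Zv^2
          + (1-4*k1)*(‖z.1‖ ^ 2 * Φv ^ (-(2 * k1)))*Zv
          + 4*(k1^2*(‖z.1‖ ^ 2 * Φv ^ (-(2 * k1)))
              + k2^2*(‖z.2‖ ^ 2 * Φv ^ (-(2 * k2))))
            *(‖z.1‖ ^ 2 * Φv ^ (-(2 * k1))))/Zv^3)
      (Φv ^ (-(2 * k2)) * (Zv^2
          + (1-4*k2)*(‖z.2‖ ^ 2 * Φv ^ (-(2 * k2)))*Zv
          + 4*(k1^2*(‖z.1‖ ^ 2 * Φv ^ (-(2 * k1)))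
              + k2^2*(‖z.2‖ ^ 2 * Φv ^ (-(2 * k2))))
            *(‖z.2‖ ^ 2 * Φv ^ (-(2 * k2))))/Zv^3)
      (Φv ^ (-(2 * k1)) * Φv ^ (-(2 * k2)) / Zv^3)
      (((((4*(k1^2*(‖z.1‖ ^ 2 * Φv ^ (-(2 * k1)))
              + k2^2*(‖z.2‖ ^ 2 * Φv ^ (-(2 * k2)))) - Zv)
          * (Φv ^ (-(2 * k1)) * Φv ^ (-(2 * k2))) / Zv^3 : ℝ)) : ℂ)
        * ((starRingEnd ℂ) z.1 * z.2))
      ?_ ?_ ?_ ?_ ?_ ?_ ?_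
  · show hessEntry k1 k2 Φv Zv z 0 0 / ((Φv : ℝ) : ℂ) = _
    simp only [hessEntry, show ((0:Fin 2) = 0) = True from by simp,
      show ((1:Fin 2) = 1) = True from by simp, show ((0:Fin 2) = 1) = False from by simp,
      show ((1:Fin 2) = 0) = False from by simp, if_true, if_false]
    rw [mul_assoc, hp00]
    simp only [hΦ1, hΦ2]
    push_cast
    field_simp
    ring
  · show hessEntry k1 k2 Φv Zv z 0 1 / ((Φv : ℝ) : ℂ) = _
    simp only [hessEntry, show ((0:Fin 2) = 0) = True from by simp,
      show ((1:Fin 2) = 1) = True from by simp, show ((0:Fin 2) = 1) = False from by simp,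
      show ((1:Fin 2) = 0) = False from by simp, if_true, if_false]
    rw [mul_assoc, hp01]
    push_cast
    field_simp
    linear_combination (-2*((Zv:ℝ):ℂ) * ((Φv ^ (-(2*k1)) : ℝ):ℂ) * ((Φv ^ (-(2*k2)) : ℝ):ℂ)
      * ((Φv:ℝ):ℂ) * (starRingEnd ℂ) z.1 * z.2) * hsC
  · show hessEntry k1 k2 Φv Zv z 1 0 / ((Φv : ℝ) : ℂ) = _
    simp only [hessEntry, show ((0:Fin 2) = 0) = True from by simp,
      show ((1:Fin 2) = 1) = True from by simp, show ((0:Fin 2) = 1) = False from by simp,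
      show ((1:Fin 2) = 0) = False from by simp, if_true, if_false]
    rw [mul_assoc, hp10]
    simp only [map_div₀, _root_.map_mul, Complex.conj_conj, Complex.conj_ofReal]
    push_cast
    field_simp
    linear_combination (-2*((Zv:ℝ):ℂ) * ((Φv ^ (-(2*k1)) : ℝ):ℂ) * ((Φv ^ (-(2*k2)) : ℝ):ℂ)
      * ((Φv:ℝ):ℂ) * (starRingEnd ℂ) z.2 * z.1) * hsC
  · show hessEntry k1 k2 Φv Zv z 1 1 / ((Φv : ℝ) : ℂ) = _
    simp only [hessEntry, show ((0:Fin 2) = 0) = True from by simp,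
      show ((1:Fin 2) = 1) = True from by simp, show ((0:Fin 2) = 1) = False from by simp,
      show ((1:Fin 2) = 0) = False from by simp, if_true, if_false]
    rw [mul_assoc, hp11]
    simp only [hΦ2]
    push_cast
    field_simp
    ring
  · -- 0 < a
    have hkt := keytrace k1 k2 (‖z.1‖ ^ 2 * Φv ^ (-(2 * k1)))
      (‖z.2‖ ^ 2 * Φv ^ (-(2 * k2))) Zv
      (k1^2*(‖z.1‖ ^ 2 * Φv ^ (-(2 * k1)))
        + k2^2*(‖z.2‖ ^ 2 * Φv ^ (-(2 * k2)))) hsum heq hZ' rfl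
    have hF : 0 < Zv^2
          + (1-4*k1)*(‖z.1‖ ^ 2 * Φv ^ (-(2 * k1)))*Zv
          + 4*(k1^2*(‖z.1‖ ^ 2 * Φv ^ (-(2 * k1)))
              + k2^2*(‖z.2‖ ^ 2 * Φv ^ (-(2 * k2))))
            *(‖z.1‖ ^ 2 * Φv ^ (-(2 * k1))) := by
      rw [hkt]
      have h2k2 : Zv ≤ 2*k2 := by
        have h2 : 2*k2*(‖z.1‖ ^ 2 * Φv ^ (-(2 * k1))
            + ‖z.2‖ ^ 2 * Φv ^ (-(2 * k2))) = 2*k2 := by rw [heq]; ring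
        nlinarith [mul_nonneg hp (sub_nonneg.2 hk12)]
      have h4 : Zv ≤ 4*k2^2 := by
        nlinarith [mul_nonneg hk2.le (by linarith : (0:ℝ) ≤ 2*k2 - 1)]
      have h5 : Zv*(‖z.1‖ ^ 2 * Φv ^ (-(2 * k1)))
          + Zv*(‖z.2‖ ^ 2 * Φv ^ (-(2 * k2))) = Zv := by
        linear_combination Zv * heq
      nlinarith [mul_le_mul_of_nonneg_right h4 hq, h5, hZpos, mul_nonneg hp hZpos.le]
    exact div_pos (mul_pos hb1 (by positivity)) (by positivity)
  · -- determinant identity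
    have hkd := keydet k1 k2 (‖z.1‖ ^ 2 * Φv ^ (-(2 * k1)))
      (‖z.2‖ ^ 2 * Φv ^ (-(2 * k2))) Zv
      (k1^2*(‖z.1‖ ^ 2 * Φv ^ (-(2 * k1)))
        + k2^2*(‖z.2‖ ^ 2 * Φv ^ (-(2 * k2)))) hsum heq hZ' rfl
    rw [Complex.normSq_mul, Complex.normSq_mul, Complex.normSq_ofReal, Complex.normSq_conj,
      ← Complex.sq_norm, ← Complex.sq_norm]
    have hdl := divlem
      (Zv^2 + (1-4*k1)*(‖z.1‖ ^ 2 * Φv ^ (-(2 * k1)))*Zv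
          + 4*(k1^2*(‖z.1‖ ^ 2 * Φv ^ (-(2 * k1)))
              + k2^2*(‖z.2‖ ^ 2 * Φv ^ (-(2 * k2))))
            *(‖z.1‖ ^ 2 * Φv ^ (-(2 * k1))))
      (Zv^2 + (1-4*k2)*(‖z.2‖ ^ 2 * Φv ^ (-(2 * k2)))*Zv
          + 4*(k1^2*(‖z.1‖ ^ 2 * Φv ^ (-(2 * k1)))
              + k2^2*(‖z.2‖ ^ 2 * Φv ^ (-(2 * k2))))
            *(‖z.2‖ ^ 2 * Φv ^ (-(2 * k2))))
      (k1^2*(‖z.1‖ ^ 2 * Φv ^ (-(2 * k1)))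
        + k2^2*(‖z.2‖ ^ 2 * Φv ^ (-(2 * k2))))
      Zv (Φv ^ (-(2 * k1))) (Φv ^ (-(2 * k2)))
      (‖z.1‖ ^ 2) (‖z.2‖ ^ 2)
      hZpos.ne' (by linear_combination hkd)
    linear_combination hdl
  · exact div_pos (mul_pos hb1 hb2) (by positivity)
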